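/- For every convex domain G ⊊ ℝⁿ and all points x, y ∈ G, the inequality c̃_G(x,y) ≤ 2√2·j*_G(x,y) holds. -/

import Mathlib

open Metric Set

/-- The new hyperbolic type metric of Song and Wang:
`c̃_G(x,y) = |x−y| / inf_{z∈∂G} max{|x−z|, |y−z|}`. -/
noncomputable def ctilde {n : ℕ} (G : Set (EuclideanSpace ℝ (Fin n)))
    (x y : EuclideanSpace ℝ (Fin n)) : ℝ :=
  dist x y / sInf ((fun z => max (dist x z) (dist y z)) '' frontier G)

/-- The `j*` metric:
`j*_G(x,y) = |x−y| / (|x−y| + 2·min{dist(x,∂G), dist(y,∂G)})`. -/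
noncomputable def jStar {n : ℕ} (G : Set (EuclideanSpace ℝ (Fin n)))
    (x y : EuclideanSpace ℝ (Fin n)) : ℝ :=
  dist x y / (dist x y + 2 * min (infDist x (frontier G)) (infDist y (frontier G)))

/-- A preconnected set meeting both an open set `G` and its complement
meets the frontier of `G`. -/
lemma aux_segment_frontier {X : Type*} [TopologicalSpace X] {S G : Set X}
    (hS : IsPreconnected S) (hG : IsOpen G) {a b : X} (ha : a ∈ S) (hb : b ∈ S)
    (haG : a ∈ G) (hbG : b ∉ G) : ∃ q ∈ S, q ∈ frontier G := by
  by_contra h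
  push_neg at h
  have hsub : S ⊆ G ∪ (closure G)ᶜ := by
    intro q hq
    by_cases hqG : q ∈ G
    · exact Or.inl hqG
    · refine Or.inr fun hc => h q hq ⟨hc, ?_⟩
      rwa [hG.interior_eq]
  have hbc : b ∈ (closure G)ᶜ := by
    intro hc
    exact h b hb ⟨hc, by rwa [hG.interior_eq]⟩
  obtain ⟨q, _, hq1, hq2⟩ := hS G (closure G)ᶜ hG isClosed_closure.isOpen_compl hsub
    ⟨a, ha, haG⟩ ⟨b, hb, hbc⟩
  exact hq2 (subset_closure hq1)

/-- If `G` lies strictly below level `c` of the unit functional `⟪e, ·⟫`, then the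
distance from `x ∈ G` to the frontier is at most `c - ⟪e, x⟫`. -/
lemma aux_height {n : ℕ} {G : Set (EuclideanSpace ℝ (Fin n))} (hGopen : IsOpen G)
    {e : EuclideanSpace ℝ (Fin n)} (he : ‖e‖ = 1) {c : ℝ}
    (hG : ∀ a ∈ G, inner ℝ e a < c) {x : EuclideanSpace ℝ (Fin n)} (hx : x ∈ G) :
    infDist x (frontier G) ≤ c - (inner ℝ e x : ℝ) := by
  set α : ℝ := c - inner ℝ e x with hα
  have hα0 : 0 < α := sub_pos.mpr (hG x hx)
  set p := x + α • e with hp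
  have hpG : p ∉ G := by
    intro hpG
    have h1 := hG p hpG
    have hee : (inner ℝ e e : ℝ) = 1 := by
      rw [real_inner_self_eq_norm_sq, he]; norm_num
    have hip : (inner ℝ e p : ℝ) = inner ℝ e x + α := by
      rw [hp, inner_add_right, real_inner_smul_right, hee, mul_one]
    rw [hip] at h1
    rw [hα] at h1
    linarith
  obtain ⟨q, hqS, hqF⟩ := aux_segment_frontier (convex_segment x p).isPreconnected hGopen
    (left_mem_segment ℝ x p) (right_mem_segment ℝ x p) hx hpG
  have hdq : dist x q ≤ α := by
    rw [segment_eq_image'] at hqS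
    obtain ⟨t, ht, rfl⟩ := hqS
    have h2 : dist x (x + t • (p - x)) = |t| * ‖p - x‖ := by
      rw [dist_eq_norm]
      simp only [sub_add_cancel_left, norm_neg, norm_smul, Real.norm_eq_abs]
    have hpx : ‖p - x‖ = α := by
      have h3 : p - x = α • e := by rw [hp]; abel
      rw [h3, norm_smul, he, mul_one, Real.norm_eq_abs, abs_of_nonneg hα0.le]
    rw [h2, hpx, abs_of_nonneg ht.1]
    nlinarith [ht.2, hα0]
  exact (infDist_le_dist_of_mem hqF).trans hdq

/-- Pythagoras: decomposition along a unit vector. -/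
lemma aux_pyth {n : ℕ} {e : EuclideanSpace ℝ (Fin n)} (he : ‖e‖ = 1)
    (w : EuclideanSpace ℝ (Fin n)) :
    ‖w‖ ^ 2 = (inner ℝ e w : ℝ) ^ 2 + ‖w - (inner ℝ e w : ℝ) • e‖ ^ 2 := by
  set γ : ℝ := inner ℝ e w with hγ
  have hee : (inner ℝ e e : ℝ) = 1 := by
    rw [real_inner_self_eq_norm_sq, he]; norm_num
  have hw : w = γ • e + (w - γ • e) := by abel
  have horth : (inner ℝ (γ • e) (w - γ • e) : ℝ) = 0 := by
    rw [real_inner_smul_left, inner_sub_right, real_inner_smul_right, hee, ← hγ]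
    ring
  calc ‖w‖ ^ 2 = ‖γ • e + (w - γ • e)‖ ^ 2 := by rw [← hw]
    _ = ‖γ • e‖ ^ 2 + 2 * (inner ℝ (γ • e) (w - γ • e) : ℝ) + ‖w - γ • e‖ ^ 2 :=
        norm_add_sq_real _ _
    _ = γ ^ 2 + ‖w - γ • e‖ ^ 2 := by
        rw [horth, norm_smul, he, mul_one, Real.norm_eq_abs, sq_abs]
        ring

set_option maxHeartbeats 1000000 in
/-- Key pointwise estimate: for each boundary point `z` of a convex open set. -/
lemma aux_key {n : ℕ} {G : Set (EuclideanSpace ℝ (Fin n))} (hGopen : IsOpen G)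
    (hGconv : Convex ℝ G) {x y z : EuclideanSpace ℝ (Fin n)}
    (hx : x ∈ G) (hy : y ∈ G) (hz : z ∈ frontier G) :
    dist x y + 2 * min (infDist x (frontier G)) (infDist y (frontier G)) ≤
      2 * Real.sqrt 2 * max (dist x z) (dist y z) := by
  classical
  have hzG : z ∉ G := by
    intro hzG
    exact hz.2 (by rwa [hGopen.interior_eq])
  obtain ⟨f, hf⟩ := geometric_hahn_banach_open_point hGconv hGopen hzG
  obtain ⟨u, hinner⟩ : ∃ u : EuclideanSpace ℝ (Fin n),
      ∀ w : EuclideanSpace ℝ (Fin n), (inner ℝ u w : ℝ) = f w :=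
    ⟨(InnerProductSpace.toDual ℝ (EuclideanSpace ℝ (Fin n))).symm f, fun w =>
      InnerProductSpace.toDual_symm_apply⟩
  have hune : u ≠ 0 := by
    intro h0
    have h1 : f x < f z := hf x hx
    rw [← hinner x, ← hinner z, h0, inner_zero_left, inner_zero_left] at h1
    exact lt_irrefl _ h1
  have hnu : (0:ℝ) < ‖u‖ := norm_pos_iff.mpr hune
  set e : EuclideanSpace ℝ (Fin n) := ‖u‖⁻¹ • u with heu
  have he : ‖e‖ = 1 := by
    rw [heu, norm_smul, norm_inv, norm_norm, inv_mul_cancel₀ hnu.ne']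
  have hie : ∀ w : EuclideanSpace ℝ (Fin n), (inner ℝ e w : ℝ) = ‖u‖⁻¹ * f w := by
    intro w
    rw [heu, real_inner_smul_left, hinner]
  set c : ℝ := inner ℝ e z with hc
  have hG' : ∀ a ∈ G, (inner ℝ e a : ℝ) < c := by
    intro a ha
    rw [hie a, hc, hie z]
    exact mul_lt_mul_of_pos_left (hf a ha) (inv_pos.mpr hnu)
  -- heights
  set α : ℝ := c - inner ℝ e x with hα
  set β : ℝ := c - inner ℝ e y with hβ
  have hα0 : 0 < α := sub_pos.mpr (hG' x hx)
  have hβ0 : 0 < β := sub_pos.mpr (hG' y hy)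
  have hdx : infDist x (frontier G) ≤ α := aux_height hGopen he hG' hx
  have hdy : infDist y (frontier G) ≤ β := aux_height hGopen he hG' hy
  set δ : ℝ := min (infDist x (frontier G)) (infDist y (frontier G)) with hδ
  have hδ0 : 0 ≤ δ := le_min infDist_nonneg infDist_nonneg
  have hδα : δ ≤ α := (min_le_left _ _).trans hdx
  have hδβ : δ ≤ β := (min_le_right _ _).trans hdy
  -- Pythagoras for z - x, z - y, y - x
  have hizx : (inner ℝ e (z - x) : ℝ) = α := by
    rw [inner_sub_right, hα, hc]
  have hizy : (inner ℝ e (z - y) : ℝ) = β := by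
    rw [inner_sub_right, hβ, hc]
  have hiyx : (inner ℝ e (y - x) : ℝ) = α - β := by
    rw [inner_sub_right, hα, hβ]; ring
  set P : EuclideanSpace ℝ (Fin n) := (z - x) - α • e with hP
  set Q : EuclideanSpace ℝ (Fin n) := (z - y) - β • e with hQ
  set U : EuclideanSpace ℝ (Fin n) := (y - x) - (α - β) • e with hU
  have hpythx : ‖z - x‖ ^ 2 = α ^ 2 + ‖P‖ ^ 2 := by
    have h := aux_pyth he (z - x); rwa [hizx] at h
  have hpythy : ‖z - y‖ ^ 2 = β ^ 2 + ‖Q‖ ^ 2 := by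
    have h := aux_pyth he (z - y); rwa [hizy] at h
  have hpythd : ‖y - x‖ ^ 2 = (α - β) ^ 2 + ‖U‖ ^ 2 := by
    have h := aux_pyth he (y - x); rwa [hiyx] at h
  have hUPQ : U = P - Q := by
    rw [hU, hP, hQ, sub_smul]
    abel
  have hUle : ‖U‖ ≤ ‖P‖ + ‖Q‖ := by rw [hUPQ]; exact norm_sub_le _ _
  -- distances
  have hAx : dist x z = ‖z - x‖ := by rw [dist_eq_norm, norm_sub_rev]
  have hAy : dist y z = ‖z - y‖ := by rw [dist_eq_norm, norm_sub_rev]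
  have hdxy : dist x y = ‖y - x‖ := by rw [dist_eq_norm, norm_sub_rev]
  set A : ℝ := ‖z - x‖
  set B : ℝ := ‖z - y‖
  set d : ℝ := ‖y - x‖
  set M : ℝ := max A B with hM
  have hAM : A ≤ M := le_max_left _ _
  have hBM : B ≤ M := le_max_right _ _
  have hM0 : 0 ≤ M := le_trans (norm_nonneg _) hAM
  have hd0 : 0 ≤ d := norm_nonneg _
  have hP0 : 0 ≤ ‖P‖ := norm_nonneg _
  have hQ0 : 0 ≤ ‖Q‖ := norm_nonneg _
  have hU0 : 0 ≤ ‖U‖ := norm_nonneg _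
  have hA0 : 0 ≤ A := norm_nonneg _
  have hB0 : 0 ≤ B := norm_nonneg _
  -- main algebraic inequality, decomposed
  have k1 : 4 * d * δ ≤ d ^ 2 + 4 * δ ^ 2 := by nlinarith [sq_nonneg (d - 2 * δ)]
  have k2 : ‖U‖ ^ 2 ≤ 2 * (‖P‖ ^ 2 + ‖Q‖ ^ 2) := by
    have k2a : ‖U‖ ^ 2 ≤ (‖P‖ + ‖Q‖) ^ 2 := pow_le_pow_left₀ hU0 hUle 2
    nlinarith [sq_nonneg (‖P‖ - ‖Q‖)]
  have k3 : 4 * δ ^ 2 ≤ (α + β) ^ 2 := by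
    nlinarith [mul_nonneg (by linarith : (0:ℝ) ≤ α + β - 2 * δ)
      (by linarith : (0:ℝ) ≤ α + β + 2 * δ)]
  have k4A : A ^ 2 ≤ M ^ 2 := pow_le_pow_left₀ hA0 hAM 2
  have k4B : B ^ 2 ≤ M ^ 2 := pow_le_pow_left₀ hB0 hBM 2
  have k5 : 2 * (α - β) ^ 2 + 2 * (α + β) ^ 2 = 4 * α ^ 2 + 4 * β ^ 2 := by ring
  have expand : (d + 2 * δ) ^ 2 = d ^ 2 + 4 * d * δ + 4 * δ ^ 2 := by ring
  have hsq : (d + 2 * δ) ^ 2 ≤ 8 * M ^ 2 := by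
    linarith [hpythx, hpythy, hpythd, k1, k2, k3, k4A, k4B, k5, expand]
  have hs2 : Real.sqrt 2 ^ 2 = 2 := Real.sq_sqrt (by norm_num)
  have hs0 : 0 ≤ Real.sqrt 2 := Real.sqrt_nonneg 2
  have hfin : d + 2 * δ ≤ 2 * Real.sqrt 2 * M := by
    have h1 : (d + 2 * δ) ^ 2 ≤ (2 * Real.sqrt 2 * M) ^ 2 := by
      have h2 : (2 * Real.sqrt 2 * M) ^ 2 = 8 * M ^ 2 := by
        rw [mul_pow, mul_pow, hs2]; ring
      rw [h2]; exact hsq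
    have hg0 : 0 ≤ d + 2 * δ := by positivity
    have hh0 : 0 ≤ 2 * Real.sqrt 2 * M := by positivity
    exact (pow_le_pow_iff_left₀ hg0 hh0 two_ne_zero).mp h1
  rw [hdxy, hAx, hAy]
  exact hfin

/-- For every convex domain `G ⊊ ℝⁿ` and all `x, y ∈ G`:
`c̃_G(x,y) ≤ 2√2·j*_G(x,y)`. -/
theorem stmt_4 {n : ℕ} (hn : 1 ≤ n) (G : Set (EuclideanSpace ℝ (Fin n)))
    (hGopen : IsOpen G) (hGconn : IsConnected G) (hGproper : G ≠ univ)
    (hGconv : Convex ℝ G)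
    (x y : EuclideanSpace ℝ (Fin n)) (hx : x ∈ G) (hy : y ∈ G) :
    ctilde G x y ≤ 2 * Real.sqrt 2 * jStar G x y := by
  have hfr : (frontier G).Nonempty := by
    rw [nonempty_frontier_iff]
    exact ⟨⟨x, hx⟩, hGproper⟩
  set δ : ℝ := min (infDist x (frontier G)) (infDist y (frontier G)) with hδ
  have hδ0 : 0 ≤ δ := le_min infDist_nonneg infDist_nonneg
  set d : ℝ := dist x y with hd
  by_cases hd0 : d = 0
  · simp [ctilde, jStar, ← hd, hd0]
  have hdpos : 0 < d := lt_of_le_of_ne dist_nonneg (Ne.symm hd0)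
  have hs0 : (0:ℝ) < Real.sqrt 2 := Real.sqrt_pos.mpr (by norm_num)
  set b : ℝ := (d + 2 * δ) / (2 * Real.sqrt 2) with hb
  have hbpos : 0 < b := by
    apply div_pos (by linarith) (by positivity)
  have hkey : ∀ v ∈ (fun z => max (dist x z) (dist y z)) '' frontier G, b ≤ v := by
    rintro v ⟨z, hz, rfl⟩
    have h := aux_key hGopen hGconv hx hy hz
    rw [hb, div_le_iff₀ (by positivity)]
    calc d + 2 * δ ≤ 2 * Real.sqrt 2 * max (dist x z) (dist y z) := h
      _ = max (dist x z) (dist y z) * (2 * Real.sqrt 2) := by ring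
  have hbm : b ≤ sInf ((fun z => max (dist x z) (dist y z)) '' frontier G) :=
    le_csInf (hfr.image _) hkey
  have h1 : ctilde G x y ≤ d / b := by
    rw [ctilde, ← hd]
    exact div_le_div_of_nonneg_left hdpos.le hbpos hbm
  have h2 : d / b = 2 * Real.sqrt 2 * jStar G x y := by
    rw [jStar, ← hd, ← hδ, hb]
    field_simp
  rw [← h2]
  exact h1
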